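/- For all n ≥ 0 and r ≥ 1, Σ_{k≥0} p̄(n − r·T_k) = σ_r mex̄(n), where T_k = k(k+1)/2 is the k-th triangular number, p̄ denotes the overpartition counting function (with p̄(m) = 0 for m < 0), and σ_r mex̄(n) is the sum of the least r-gaps over all overpartitions of n. -/

import Mathlib

/-- An overpartition of `n`: a multiset of non-overlined positive parts together with a
finite set of overlined positive parts (at most one overlined copy per part size). -/
structure Overpartition (n : ℕ) where
  parts : Multiset ℕ              -- non-overlined parts
  overlined : Finset ℕ            -- overlined parts (distinct sizes)
  parts_pos : ∀ i ∈ parts, 0 < i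
  overlined_pos : ∀ i ∈ overlined, 0 < i
  sum_eq : parts.sum + ∑ i ∈ overlined, i = n

/-- Minimal excludant of an overpartition: the least positive integer not among
the non-overlined parts. -/
noncomputable def Overpartition.mex {n : ℕ} (π : Overpartition n) : ℕ :=
  sInf {m : ℕ | 0 < m ∧ m ∉ π.parts}

/-- Least `r`-gap: the least positive integer occurring fewer than `r` times among
the non-overlined parts. -/
noncomputable def Overpartition.rgap {n : ℕ} (r : ℕ) (π : Overpartition n) : ℕ :=
  sInf {m : ℕ | 0 < m ∧ π.parts.count m < r}

/-- `σmex̄(n)`: sum of minimal excludants over all overpartitions of `n`. -/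
noncomputable def sigmaMex (n : ℕ) : ℕ := ∑ᶠ π : Overpartition n, π.mex

/-- `σ_r mex̄(n)`: sum of least `r`-gaps over all overpartitions of `n`. -/
noncomputable def sigmaRMex (r n : ℕ) : ℕ := ∑ᶠ π : Overpartition n, π.rgap r

/-- `p̄(n)`: the number of overpartitions of `n`. -/
noncomputable def pbar (n : ℕ) : ℕ := Nat.card (Overpartition n)

namespace OPAux

theorem op_ext {n : ℕ} {π σ : Overpartition n} (h1 : π.parts = σ.parts)
    (h2 : π.overlined = σ.overlined) : π = σ := by
  cases π; cases σ; simp_all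

theorem parts_sum_le {n : ℕ} (π : Overpartition n) : π.parts.sum ≤ n := by
  have := π.sum_eq; omega

theorem mem_le_sum {s : Multiset ℕ} {m : ℕ} (h : m ∈ s) : m ≤ s.sum := by
  have := Multiset.cons_erase h
  calc m ≤ m + (s.erase m).sum := Nat.le_add_right _ _
    _ = (m ::ₘ s.erase m).sum := (Multiset.sum_cons _ _).symm
    _ = s.sum := by rw [this]

theorem notmem_of_gt {n : ℕ} (π : Overpartition n) {m : ℕ} (hm : n < m) : m ∉ π.parts := by
  intro h
  exact absurd (le_trans (mem_le_sum h) (parts_sum_le π)) (by omega)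

theorem count_le {n : ℕ} (π : Overpartition n) (m : ℕ) : π.parts.count m ≤ n := by
  calc π.parts.count m ≤ Multiset.card π.parts := Multiset.count_le_card _ _
    _ = Multiset.card π.parts • 1 := by simp
    _ ≤ π.parts.sum := Multiset.card_nsmul_le_sum (fun x hx => π.parts_pos x hx)
    _ ≤ n := parts_sum_le π

/-- big multiset dominating all `parts` -/
noncomputable def bigM (n : ℕ) : Multiset ℕ :=
  (Finset.range (n + 1)).val.bind fun m => Multiset.replicate n m

theorem count_bigM {n m : ℕ} (hm : m ≤ n) : (bigM n).count m = n := by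
  rw [bigM, Multiset.count_bind]
  rw [show ((Finset.range (n+1)).val.map fun i => (Multiset.replicate n i).count m).sum
      = ∑ i ∈ Finset.range (n+1), (Multiset.replicate n i).count m from rfl]
  simp [Multiset.count_replicate, Finset.sum_ite_eq, Finset.mem_range]
  omega

theorem parts_le_bigM {n : ℕ} (π : Overpartition n) : π.parts ≤ bigM n := by
  rw [Multiset.le_iff_count]
  intro m
  by_cases hm : m ≤ n
  · rw [count_bigM hm]; exact count_le π m
  · have : π.parts.count m = 0 :=
      Multiset.count_eq_zero.2 (notmem_of_gt π (by omega))
    omega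

instance finiteOP (n : ℕ) : Finite (Overpartition n) := by
  have : Function.Injective (fun π : Overpartition n =>
      ((⟨π.parts, by simp [Multiset.mem_powerset, parts_le_bigM]⟩ :
          (Multiset.toFinset (Multiset.powerset (bigM n)) : Finset (Multiset ℕ))),
       (⟨π.overlined, by
          simp only [Finset.mem_powerset]
          intro i hi
          have h1 : i ≤ n := by
            have := π.sum_eq
            have : i ≤ ∑ j ∈ π.overlined, j := Finset.single_le_sum (fun j _ => Nat.zero_le j) hi
            omega
          exact Finset.mem_range.2 (by omega)⟩ :
          ((Finset.range (n + 1)).powerset : Finset (Finset ℕ))))) := by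
    intro π σ h
    simp only [Prod.mk.injEq, Subtype.mk.injEq] at h
    exact op_ext h.1 h.2
  exact Finite.of_injective _ this

/-- `r` copies of each of `1, …, j`. -/
def rep (r j : ℕ) : Multiset ℕ := (Finset.Icc 1 j).val.bind fun i => Multiset.replicate r i

theorem rep_count (r j m : ℕ) : (rep r j).count m = if 1 ≤ m ∧ m ≤ j then r else 0 := by
  rw [rep, Multiset.count_bind]
  rw [show ((Finset.Icc 1 j).val.map fun i => (Multiset.replicate r i).count m).sum
      = ∑ i ∈ Finset.Icc 1 j, (Multiset.replicate r i).count m from rfl]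
  simp [Multiset.count_replicate, Finset.sum_ite_eq, Finset.mem_Icc]

theorem sum_Icc_id (j : ℕ) : ∑ i ∈ Finset.Icc 1 j, i = j * (j + 1) / 2 := by
  have h0 : Finset.range (j + 1) = insert 0 (Finset.Icc 1 j) := by
    ext i; simp [Finset.mem_range, Finset.mem_Icc]; omega
  have h1 : (∑ i ∈ Finset.range (j + 1), i) * 2 = (j + 1) * j :=
    Finset.sum_range_id_mul_two (j + 1)
  have h2 : (0 : ℕ) ∉ Finset.Icc 1 j := by simp
  rw [h0, Finset.sum_insert h2, Nat.mul_comm (j+1) j] at h1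
  omega

theorem rep_sum (r j : ℕ) : (rep r j).sum = r * (j * (j + 1) / 2) := by
  rw [rep, Multiset.sum_bind]
  rw [show ((Finset.Icc 1 j).val.map fun i => (Multiset.replicate r i).sum).sum
      = ∑ i ∈ Finset.Icc 1 j, (Multiset.replicate r i).sum from rfl]
  simp only [Multiset.sum_replicate, smul_eq_mul]
  rw [← Finset.mul_sum, sum_Icc_id]

theorem rep_mem_pos {r j i : ℕ} (h : i ∈ rep r j) : 0 < i := by
  rw [rep, Multiset.mem_bind] at h
  obtain ⟨a, ha, hia⟩ := h
  have h1 := Multiset.eq_of_mem_replicate hia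
  have h2 := (Finset.mem_Icc.1 (by simpa using ha : a ∈ Finset.Icc 1 j)).1
  omega

theorem msum_le {s t : Multiset ℕ} (h : s ≤ t) : s.sum ≤ t.sum := by
  have : t = s + (t - s) := (tsub_add_cancel_of_le h).symm.trans (by rw [add_comm])
  calc s.sum ≤ s.sum + (t - s).sum := Nat.le_add_right _ _
    _ = t.sum := by rw [← Multiset.sum_add, ← this]

/-- Removing `r` copies of each of `1, …, j` is a bijection onto overpartitions of
`n - r * T j`. -/
noncomputable def shiftEquiv (n r j : ℕ) (h : r * (j * (j + 1) / 2) ≤ n) :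
    {π : Overpartition n // rep r j ≤ π.parts} ≃ Overpartition (n - r * (j * (j + 1) / 2)) where
  toFun σ :=
    { parts := σ.1.parts - rep r j
      overlined := σ.1.overlined
      parts_pos := fun i hi =>
        σ.1.parts_pos i (Multiset.mem_of_le (Multiset.sub_le_self _ _) hi)
      overlined_pos := σ.1.overlined_pos
      sum_eq := by
        have h2 : (σ.1.parts - rep r j).sum + (rep r j).sum = σ.1.parts.sum := by
          rw [← Multiset.sum_add, tsub_add_cancel_of_le σ.2]
        have h3 := σ.1.sum_eq
        rw [rep_sum] at h2
        omega }
  invFun τ :=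
    ⟨{ parts := τ.parts + rep r j
       overlined := τ.overlined
       parts_pos := fun i hi => by
         rcases Multiset.mem_add.1 hi with hi | hi
         · exact τ.parts_pos i hi
         · exact rep_mem_pos hi
       overlined_pos := τ.overlined_pos
       sum_eq := by
         rw [Multiset.sum_add, rep_sum]
         have := τ.sum_eq
         omega },
     Multiset.le_add_left _ _⟩
  left_inv σ := Subtype.ext (op_ext (tsub_add_cancel_of_le σ.2) rfl)
  right_inv τ := op_ext (add_tsub_cancel_right _ _) rfl

theorem card_eq (n r j : ℕ) (h : r * (j * (j + 1) / 2) ≤ n) :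
    Nat.card {π : Overpartition n // rep r j ≤ π.parts} = pbar (n - r * (j * (j + 1) / 2)) :=
  Nat.card_congr (shiftEquiv n r j h)

theorem rgap_eq {n r : ℕ} (hr : 1 ≤ r) (π : Overpartition n) :
    π.rgap r = ∑ j ∈ Finset.range (n + 1), (if rep r j ≤ π.parts then 1 else 0) := by
  classical
  have hne : (n + 1) ∈ {m : ℕ | 0 < m ∧ π.parts.count m < r} := by
    refine ⟨by omega, ?_⟩
    rw [Multiset.count_eq_zero.2 (notmem_of_gt π (by omega))]
    omega
  have hg : π.rgap r ∈ {m : ℕ | 0 < m ∧ π.parts.count m < r} :=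
    Nat.sInf_mem ⟨_, hne⟩
  have hgle : π.rgap r ≤ n + 1 := Nat.sInf_le hne
  have key : ∀ j, (rep r j ≤ π.parts ↔ j < π.rgap r) := by
    intro j
    rw [Multiset.le_iff_count]
    constructor
    · intro hc
      by_contra hj
      push_neg at hj
      have h1 := hc (π.rgap r)
      rw [rep_count] at h1
      have h2 : 1 ≤ π.rgap r ∧ π.rgap r ≤ j := ⟨hg.1, hj⟩
      rw [if_pos h2] at h1
      exact absurd h1 (by have := hg.2; omega)
    · intro hj m
      rw [rep_count]
      split
      next hm =>
        have hnm : m ∉ {m : ℕ | 0 < m ∧ π.parts.count m < r} :=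
          Nat.notMem_of_lt_sInf (lt_of_le_of_lt hm.2 hj)
        simp only [Set.mem_setOf_eq, not_and, not_lt] at hnm
        exact hnm (by omega)
      · omega
  have hfil : (Finset.range (n + 1)).filter (fun j => rep r j ≤ π.parts)
      = Finset.range (π.rgap r) := by
    ext j
    simp only [Finset.mem_filter, Finset.mem_range, key]
    omega
  rw [Finset.sum_boole, hfil]
  simp

end OPAux

/-- For n ≥ 0 and r ≥ 1, Σ_{k≥0} p̄(n − r·T_k) = σ_r mex̄(n), where the terms with
r·T_k > n vanish. -/
theorem stmt6 (n r : ℕ) (hr : 1 ≤ r) :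
    (∑ᶠ k : ℕ, if r * (k * (k + 1) / 2) ≤ n then pbar (n - r * (k * (k + 1) / 2)) else 0)
      = sigmaRMex r n := by
  classical
  letI : Fintype (Overpartition n) := Fintype.ofFinite _
  have htri : ∀ k : ℕ, k ≤ k * (k + 1) / 2 := by
    intro k
    rw [Nat.le_div_iff_mul_le (show 0 < 2 by norm_num)]
    rcases Nat.eq_zero_or_pos k with h | h
    · simp [h]
    · exact Nat.mul_le_mul_left k (by omega)
  have hsupp : (Function.support fun k : ℕ =>
      if r * (k * (k + 1) / 2) ≤ n then pbar (n - r * (k * (k + 1) / 2)) else 0)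
      ⊆ ((Finset.range (n + 1) : Finset ℕ) : Set ℕ) := by
    intro k hk
    simp only [Function.mem_support] at hk
    simp only [Finset.coe_range, Set.mem_Iio]
    by_contra hkk
    push_neg at hkk
    have h1 : n < r * (k * (k + 1) / 2) := by
      have h2 := htri k
      calc n < k := by omega
        _ ≤ k * (k + 1) / 2 := h2
        _ ≤ r * (k * (k + 1) / 2) := Nat.le_mul_of_pos_left _ (by omega)
    rw [if_neg (by omega)] at hk
    exact hk rfl
  rw [finsum_eq_sum_of_support_subset _ hsupp]
  rw [sigmaRMex, finsum_eq_sum_of_fintype]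
  have hrgap : ∀ π : Overpartition n, π.rgap r
      = ∑ j ∈ Finset.range (n + 1), (if OPAux.rep r j ≤ π.parts then 1 else 0) :=
    fun π => OPAux.rgap_eq hr π
  rw [Finset.sum_congr rfl (fun π _ => hrgap π), Finset.sum_comm]
  refine Finset.sum_congr rfl (fun j _ => ?_)
  have hcount : (∑ π : Overpartition n, if OPAux.rep r j ≤ π.parts then 1 else 0)
      = Nat.card {π : Overpartition n // OPAux.rep r j ≤ π.parts} := by
    rw [Nat.card_eq_fintype_card, Fintype.card_subtype, Finset.sum_boole]
    simp
  by_cases h : r * (j * (j + 1) / 2) ≤ n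
  · rw [if_pos h, hcount, OPAux.card_eq n r j h]
  · rw [if_neg h, hcount]
    have : IsEmpty {π : Overpartition n // OPAux.rep r j ≤ π.parts} := by
      refine ⟨fun σ => ?_⟩
      have h1 : (OPAux.rep r j).sum ≤ σ.1.parts.sum := OPAux.msum_le σ.2
      rw [OPAux.rep_sum] at h1
      have h2 := OPAux.parts_sum_le σ.1
      omega
    simp []
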